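/- Let A = (a_{i₁⋯i_m}) be a real m-th order n-dimensional tensor and let λ ∈ ℂ be an eigenvalue of A, i.e., there is a nonzero x ∈ ℂⁿ with A x^{m-1} = λ x^{[m-1]}. Then there exists an index i ∈ {1,…,n} such that |λ − a_{i⋯i}| ≤ Σ { |a_{i i₂⋯i_m}| : i₂,…,i_m ∈ {1,…,n}, (i₂,…,i_m) ≠ (i,…,i) }. -/

import Mathlib

open Finset

variable {m n : ℕ}

/-- The homogeneous form `A xᵐ` of an `m`-th order `n`-dimensional tensor `A`. -/
noncomputable def tApply (A : (Fin m → Fin n) → ℝ) (x : Fin n → ℝ) : ℝ :=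
  ∑ f : Fin m → Fin n, A f * ∏ j, x (f j)

/-- A tensor is symmetric if its entries are invariant under any permutation of the indices. -/
def IsSymmT (A : (Fin m → Fin n) → ℝ) : Prop :=
  ∀ (σ : Equiv.Perm (Fin m)) (f : Fin m → Fin n), A (f ∘ σ) = A f

/-- The `i`-th component of the vector `A x^{m-1}`:
`Σ_{i₂,…,i_m} a_{i i₂ ⋯ i_m} x_{i₂} ⋯ x_{i_m}`. -/
noncomputable def tVec [NeZero m] (A : (Fin m → Fin n) → ℝ) (x : Fin n → ℝ) (i : Fin n) : ℝ :=
  ∑ f ∈ univ.filter (fun f : Fin m → Fin n => f 0 = i),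
    A f * ∏ j ∈ univ.erase (0 : Fin m), x (f j)

/-- The `i`-th component of the vector `A x^{m-1}` for complex `x`. -/
noncomputable def tVecC [NeZero m] (A : (Fin m → Fin n) → ℝ) (x : Fin n → ℂ) (i : Fin n) : ℂ :=
  ∑ f ∈ univ.filter (fun f : Fin m → Fin n => f 0 = i),
    (A f : ℂ) * ∏ j ∈ univ.erase (0 : Fin m), x (f j)

/-- The sum of the absolute values of the off-diagonal entries in the `i`-th row of `A`. -/
noncomputable def offDiagSum [NeZero m] (A : (Fin m → Fin n) → ℝ) (i : Fin n) : ℝ :=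
  ∑ f ∈ univ.filter (fun f : Fin m → Fin n => f 0 = i ∧ f ≠ (fun _ => i)), |A f|

/-- A diagonally dominated tensor. -/
def DiagDom [NeZero m] (A : (Fin m → Fin n) → ℝ) : Prop :=
  ∀ i : Fin n, offDiagSum A i ≤ A (fun _ => i)

/-- A strictly diagonally dominated tensor. -/
def StrictDiagDom [NeZero m] (A : (Fin m → Fin n) → ℝ) : Prop :=
  ∀ i : Fin n, offDiagSum A i < A (fun _ => i)

/-- The sum of all the entries in the `i`-th row of `A`. -/
noncomputable def rowSum [NeZero m] (A : (Fin m → Fin n) → ℝ) (i : Fin n) : ℝ :=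
  ∑ f ∈ univ.filter (fun f : Fin m → Fin n => f 0 = i), A f

/-- A B₀ tensor. -/
def IsB0 [NeZero m] (A : (Fin m → Fin n) → ℝ) : Prop :=
  ∀ i : Fin n, 0 ≤ rowSum A i ∧
    ∀ f : Fin m → Fin n, f 0 = i → f ≠ (fun _ => i) →
      A f ≤ (1 / (n : ℝ) ^ (m - 1)) * rowSum A i

/-- A B tensor. -/
def IsB [NeZero m] (A : (Fin m → Fin n) → ℝ) : Prop :=
  ∀ i : Fin n, 0 < rowSum A i ∧
    ∀ f : Fin m → Fin n, f 0 = i → f ≠ (fun _ => i) →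
      A f < (1 / (n : ℝ) ^ (m - 1)) * rowSum A i

/-- A Z tensor: all off-diagonal entries are non-positive. -/
def IsZ [NeZero m] (A : (Fin m → Fin n) → ℝ) : Prop :=
  ∀ (i : Fin n) (f : Fin m → Fin n), f 0 = i → f ≠ (fun _ => i) → A f ≤ 0

/-- The partially all one tensor `E^J`. -/
noncomputable def allOne (m : ℕ) {n : ℕ} (J : Finset (Fin n)) : (Fin m → Fin n) → ℝ :=
  fun f => if ∀ j, f j ∈ J then 1 else 0

/-- `Ĵ(B)`: the set of rows of `B` with at least one positive off-diagonal entry. -/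
noncomputable def hatJ [NeZero m] (B : (Fin m → Fin n) → ℝ) : Finset (Fin n) :=
  univ.filter fun i => ∃ f : Fin m → Fin n, f 0 = i ∧ f ≠ (fun _ => i) ∧ 0 < B f

/-- every (complex) eigenvalue of a real tensor lies in a Gershgorin-type disc:
`|λ − a_{i⋯i}| ≤ Σ {|a_{i i₂⋯i_m}| : (i₂,…,i_m) ≠ (i,…,i)}` for some row `i`. -/
theorem eigenvalue_gershgorin
    {m n : ℕ} [NeZero m] (hm : 2 ≤ m) (hn : 1 ≤ n)
    (A : (Fin m → Fin n) → ℝ) (lam : ℂ) (x : Fin n → ℂ) (hx : x ≠ 0)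
    (heig : ∀ i : Fin n, tVecC A x i = lam * x i ^ (m - 1)) :
    ∃ i : Fin n, ‖lam - ((A fun _ => i : ℝ) : ℂ)‖ ≤ offDiagSum A i := by
  obtain ⟨i, -, hi⟩ := Finset.exists_max_image (univ : Finset (Fin n))
    (fun j => ‖x j‖) ⟨⟨0, hn⟩, mem_univ _⟩
  have hi' : ∀ j, ‖x j‖ ≤ ‖x i‖ := fun j => hi j (mem_univ j)
  have hxi : 0 < ‖x i‖ := by
    obtain ⟨j, hj⟩ := Function.ne_iff.mp hx
    exact lt_of_lt_of_le (by simpa using hj) (hi' j)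
  refine ⟨i, ?_⟩
  have hcard : (univ.erase (0 : Fin m)).card = m - 1 := by
    rw [Finset.card_erase_of_mem (mem_univ _), Finset.card_univ, Fintype.card_fin]
  have hconstmem : (fun _ => i : Fin m → Fin n) ∈
      univ.filter (fun f : Fin m → Fin n => f 0 = i) := by simp
  have hsplit := Finset.add_sum_erase _
    (fun f : Fin m → Fin n => (A f : ℂ) * ∏ j ∈ univ.erase (0 : Fin m), x (f j)) hconstmem
  have hprodc : (∏ j ∈ univ.erase (0 : Fin m), x ((fun _ => i : Fin m → Fin n) j))
      = x i ^ (m - 1) := by rw [Finset.prod_const, hcard]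
  have hset : (univ.filter (fun f : Fin m → Fin n => f 0 = i)).erase (fun _ => i)
      = univ.filter (fun f : Fin m → Fin n => f 0 = i ∧ f ≠ (fun _ => i)) := by
    ext f; simp [Finset.mem_erase, and_comm]
  have key : (lam - ((A fun _ => i : ℝ) : ℂ)) * x i ^ (m - 1)
      = ∑ f ∈ univ.filter (fun f : Fin m → Fin n => f 0 = i ∧ f ≠ (fun _ => i)),
        (A f : ℂ) * ∏ j ∈ univ.erase (0 : Fin m), x (f j) := by
    rw [← hset]
    have := heig i
    rw [tVecC, ← hsplit] at this
    beta_reduce at this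
    rw [hprodc] at this
    linear_combination (-1 : ℂ) * this
  have hterm : ∀ f ∈ univ.filter (fun f : Fin m → Fin n => f 0 = i ∧ f ≠ (fun _ => i)),
      ‖(A f : ℂ) * ∏ j ∈ univ.erase (0 : Fin m), x (f j)‖
        ≤ |A f| * ‖x i‖ ^ (m - 1) := by
    intro f _
    rw [norm_mul, Complex.norm_real, Real.norm_eq_abs, norm_prod]
    refine mul_le_mul_of_nonneg_left ?_ (abs_nonneg _)
    calc (∏ j ∈ univ.erase (0 : Fin m), ‖x (f j)‖)
        ≤ ∏ _j ∈ univ.erase (0 : Fin m), ‖x i‖ :=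
          Finset.prod_le_prod (fun j _ => (norm_nonneg _)) (fun j _ => hi' _)
      _ = ‖x i‖ ^ (m - 1) := by rw [Finset.prod_const, hcard]
  have hbound : ‖lam - ((A fun _ => i : ℝ) : ℂ)‖ * ‖x i‖ ^ (m - 1)
      ≤ offDiagSum A i * ‖x i‖ ^ (m - 1) := by
    have := (norm_sum_le _ _).trans (Finset.sum_le_sum hterm)
    rw [← key, norm_mul, norm_pow] at this
    rw [offDiagSum, Finset.sum_mul]
    exact this
  exact le_of_mul_le_mul_right hbound (pow_pos hxi _)
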